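/- Consider a finite vertex set V, channel sizes c : V → ℕ with 1 ≤ c(i) ≤ C, neighborhoods N : V → Finset V, hidden states h : V → ℝ^{d'}, and coordinates X(i) ∈ ℝ^{3×c(i)} for each i ∈ V. Let one message-passing layer be defined, for arbitrary functions φ_m : ℝ^{d'} × ℝ^{d'} × ℝ^{d×d} → ℝ^{m}, φ_x : ℝ^{m} → ℝ^{C}, φ_h : ℝ^{d'} × ℝ^{m} → ℝ^{d'}, by: m_{ij} = φ_m(h(i), h(j), T_R(X(i), X(j))/(‖T_R(X(i), X(j))‖_F + 1)); X_{ij} = T_S(X(i) − μ_j 1ᵀ, φ_x(m_{ij})) with μ_j the column mean of X(j); h'(i) = φ_h(h(i), Σ_{j ∈ N(i)} m_{ij}); X'(i) = X(i) + (1/|N(i)|) Σ_{j ∈ N(i)} X_{ij}, where T_R is the geometric relation extractor with fixed parameters A, w per vertex and T_S the average-pooling geometric message scaler. Then this layer is E(3)-invariant on hidden states and E(3)-equivariant on coordinates: for every real orthogonal 3×3 matrix Q and t ∈ ℝ³, replacing every X(i) by Q X(i) + t 1ᵀ leaves every h'(i) unchanged and replaces every X'(i) by Q X'(i) + t 1ᵀ.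 -/
import Mathlib


open Matrix BigOperators

noncomputable section

/-- Euclidean distance between the `p`-th column of `X` and the `q`-th column of `Y`. -/
def colDist {ci cj : ℕ} (X : Matrix (Fin 3) (Fin ci) ℝ) (Y : Matrix (Fin 3) (Fin cj) ℝ)
    (p : Fin ci) (q : Fin cj) : ℝ :=
  Real.sqrt (∑ r : Fin 3, (X r p - Y r q) ^ 2)

/-- Rigid (Euclidean) action `g·X = QX + t1ᵀ`, acting columnwise by `x ↦ Qx + t`. -/
def rigid {c : ℕ} (Q : Matrix (Fin 3) (Fin 3) ℝ) (t : Fin 3 → ℝ)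
    (X : Matrix (Fin 3) (Fin c) ℝ) : Matrix (Fin 3) (Fin c) ℝ :=
  Matrix.of fun r p => (∑ s : Fin 3, Q r s * X s p) + t r

/-- Geometric relation extractor `T_R(X_i, X_j) = A_iᵀ ((w_i w_jᵀ) ⊙ D(X_i, X_j)) A_j`. -/
def TR {ci cj d : ℕ} (Ai : Matrix (Fin ci) (Fin d) ℝ) (Aj : Matrix (Fin cj) (Fin d) ℝ)
    (wi : Fin ci → ℝ) (wj : Fin cj → ℝ)
    (X : Matrix (Fin 3) (Fin ci) ℝ) (Y : Matrix (Fin 3) (Fin cj) ℝ) :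
    Matrix (Fin d) (Fin d) ℝ :=
  Aiᵀ * (Matrix.of fun p q => wi p * wj q * colDist X Y p q) * Aj

/-- Frobenius norm of a real matrix. -/
def frob {n m : ℕ} (M : Matrix (Fin n) (Fin m) ℝ) : ℝ :=
  Real.sqrt (∑ i : Fin n, ∑ j : Fin m, (M i j) ^ 2)

/-- Average pooling of `s ∈ ℝ^C` with window size `C − c + 1` and stride 1. -/
def avgPool {c C : ℕ} (hc : c ≤ C) (s : Fin C → ℝ) : Fin c → ℝ :=
  fun k => (∑ m : Fin (C - c + 1), s ⟨k.val + m.val, by omega⟩) / ((C - c + 1 : ℕ) : ℝ)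

/-- Geometric message scaler `T_S(X, s) = X · diag(s')`. -/
def TS {c C : ℕ} (hc : c ≤ C) (X : Matrix (Fin 3) (Fin c) ℝ) (s : Fin C → ℝ) :
    Matrix (Fin 3) (Fin c) ℝ :=
  Matrix.of fun r p => X r p * avgPool hc s p

variable {V : Type*} {d dh m' C : ℕ}

/-- Non-geometric message `m_{ij}` between vertices `i` and `j`. -/
def msgOf (c : V → ℕ)
    (A : (i : V) → Matrix (Fin (c i)) (Fin d) ℝ) (w : (i : V) → Fin (c i) → ℝ)
    (φm : (Fin dh → ℝ) → (Fin dh → ℝ) → Matrix (Fin d) (Fin d) ℝ → (Fin m' → ℝ))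
    (h : V → Fin dh → ℝ) (X : (i : V) → Matrix (Fin 3) (Fin (c i)) ℝ)
    (i j : V) : Fin m' → ℝ :=
  φm (h i) (h j)
    ((frob (TR (A i) (A j) (w i) (w j) (X i) (X j)) + 1)⁻¹ •
      TR (A i) (A j) (w i) (w j) (X i) (X j))

/-- Geometric message `X_{ij} = T_S(X_i − μ_j 1ᵀ, φ_x(m_{ij}))`. -/
def xMsgOf (c : V → ℕ) (hC : ∀ i, c i ≤ C)
    (A : (i : V) → Matrix (Fin (c i)) (Fin d) ℝ) (w : (i : V) → Fin (c i) → ℝ)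
    (φm : (Fin dh → ℝ) → (Fin dh → ℝ) → Matrix (Fin d) (Fin d) ℝ → (Fin m' → ℝ))
    (φx : (Fin m' → ℝ) → (Fin C → ℝ))
    (h : V → Fin dh → ℝ) (X : (i : V) → Matrix (Fin 3) (Fin (c i)) ℝ)
    (i j : V) : Matrix (Fin 3) (Fin (c i)) ℝ :=
  TS (hC i) (Matrix.of fun r p => X i r p - (∑ q : Fin (c j), X j r q) / ((c j : ℕ) : ℝ))
    (φx (msgOf c A w φm h X i j))

/-- Hidden-state update `h'(i) = φ_h(h(i), Σ_{j ∈ N(i)} m_{ij})`. -/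
def hOut (c : V → ℕ)
    (A : (i : V) → Matrix (Fin (c i)) (Fin d) ℝ) (w : (i : V) → Fin (c i) → ℝ)
    (φm : (Fin dh → ℝ) → (Fin dh → ℝ) → Matrix (Fin d) (Fin d) ℝ → (Fin m' → ℝ))
    (φh : (Fin dh → ℝ) → (Fin m' → ℝ) → (Fin dh → ℝ))
    (N : V → Finset V)
    (h : V → Fin dh → ℝ) (X : (i : V) → Matrix (Fin 3) (Fin (c i)) ℝ)
    (i : V) : Fin dh → ℝ :=
  φh (h i) (∑ j ∈ N i, msgOf c A w φm h X i j)

/-- Coordinate update `X'(i) = X(i) + (1/|N(i)|) Σ_{j ∈ N(i)} X_{ij}`. -/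
def xOut (c : V → ℕ) (hC : ∀ i, c i ≤ C)
    (A : (i : V) → Matrix (Fin (c i)) (Fin d) ℝ) (w : (i : V) → Fin (c i) → ℝ)
    (φm : (Fin dh → ℝ) → (Fin dh → ℝ) → Matrix (Fin d) (Fin d) ℝ → (Fin m' → ℝ))
    (φx : (Fin m' → ℝ) → (Fin C → ℝ))
    (N : V → Finset V)
    (h : V → Fin dh → ℝ) (X : (i : V) → Matrix (Fin 3) (Fin (c i)) ℝ)
    (i : V) : Matrix (Fin 3) (Fin (c i)) ℝ :=
  X i + (((N i).card : ℝ))⁻¹ • ∑ j ∈ N i, xMsgOf c hC A w φm φx h X i j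

lemma rigid_quad {Q : Matrix (Fin 3) (Fin 3) ℝ} (hQ : Qᵀ * Q = 1) (a : Fin 3 → ℝ) :
    ∑ r : Fin 3, (∑ s : Fin 3, Q r s * a s) ^ 2 = ∑ s : Fin 3, a s ^ 2 := by
  have h1 : ∀ s u : Fin 3, ∑ r : Fin 3, Q r s * Q r u = if s = u then 1 else 0 := by
    intro s u
    have := congrFun (congrFun hQ s) u
    simpa [Matrix.mul_apply, Matrix.transpose_apply, Matrix.one_apply] using this
  have h2 : ∀ r : Fin 3, (∑ s : Fin 3, Q r s * a s) ^ 2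
      = ∑ s : Fin 3, ∑ u : Fin 3, (a s * a u) * (Q r s * Q r u) := by
    intro r
    rw [sq, Finset.sum_mul_sum]
    exact Finset.sum_congr rfl fun s _ => Finset.sum_congr rfl fun u _ => by ring
  simp_rw [h2]
  rw [Finset.sum_comm]
  have h3 : ∀ s : Fin 3, ∑ r : Fin 3, ∑ u : Fin 3, (a s * a u) * (Q r s * Q r u)
      = ∑ u : Fin 3, (a s * a u) * ∑ r : Fin 3, Q r s * Q r u := by
    intro s
    rw [Finset.sum_comm]
    exact Finset.sum_congr rfl fun u _ => by rw [Finset.mul_sum]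
  simp_rw [h3, h1]
  simp [sq]

lemma colDist_rigid {ci cj : ℕ} {Q : Matrix (Fin 3) (Fin 3) ℝ} (hQ : Qᵀ * Q = 1)
    (t : Fin 3 → ℝ) (X : Matrix (Fin 3) (Fin ci) ℝ) (Y : Matrix (Fin 3) (Fin cj) ℝ) :
    colDist (rigid Q t X) (rigid Q t Y) = colDist X Y := by
  funext p q
  unfold colDist rigid
  congr 1
  have : ∀ r : Fin 3,
      ((Matrix.of fun r p => (∑ s : Fin 3, Q r s * X s p) + t r) r p
        - (Matrix.of fun r q => (∑ s : Fin 3, Q r s * Y s q) + t r) r q)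
      = ∑ s : Fin 3, Q r s * (X s p - Y s q) := by
    intro r
    simp only [Matrix.of_apply, mul_sub, Finset.sum_sub_distrib]
    ring
  simp_rw [this]
  exact rigid_quad hQ _

lemma msgOf_rigid {V : Type*} {d dh m' : ℕ} (c : V → ℕ)
    (A : (i : V) → Matrix (Fin (c i)) (Fin d) ℝ) (w : (i : V) → Fin (c i) → ℝ)
    (φm : (Fin dh → ℝ) → (Fin dh → ℝ) → Matrix (Fin d) (Fin d) ℝ → (Fin m' → ℝ))
    (h : V → Fin dh → ℝ) (X : (i : V) → Matrix (Fin 3) (Fin (c i)) ℝ)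
    {Q : Matrix (Fin 3) (Fin 3) ℝ} (hQ : Qᵀ * Q = 1) (t : Fin 3 → ℝ) (i j : V) :
    msgOf c A w φm h (fun k => rigid Q t (X k)) i j = msgOf c A w φm h X i j := by
  unfold msgOf TR
  rw [colDist_rigid hQ t]

lemma xMsgOf_rigid {V : Type*} {d dh m' C : ℕ} (c : V → ℕ) (hcpos : ∀ i, 0 < c i)
    (hC : ∀ i, c i ≤ C)
    (A : (i : V) → Matrix (Fin (c i)) (Fin d) ℝ) (w : (i : V) → Fin (c i) → ℝ)
    (φm : (Fin dh → ℝ) → (Fin dh → ℝ) → Matrix (Fin d) (Fin d) ℝ → (Fin m' → ℝ))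
    (φx : (Fin m' → ℝ) → (Fin C → ℝ))
    (h : V → Fin dh → ℝ) (X : (i : V) → Matrix (Fin 3) (Fin (c i)) ℝ)
    {Q : Matrix (Fin 3) (Fin 3) ℝ} (hQ : Qᵀ * Q = 1) (t : Fin 3 → ℝ) (i j : V) :
    xMsgOf c hC A w φm φx h (fun k => rigid Q t (X k)) i j
      = Matrix.of fun r p => ∑ s : Fin 3, Q r s * xMsgOf c hC A w φm φx h X i j s p := by
  have hm := msgOf_rigid c A w φm h X hQ t i j
  unfold xMsgOf TS
  rw [hm]
  funext r p
  have hcj : ((c j : ℕ) : ℝ) ≠ 0 := Nat.cast_ne_zero.mpr (hcpos j).ne'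
  have hcent : (rigid Q t (X i)) r p
      - (∑ q : Fin (c j), rigid Q t (X j) r q) / ((c j : ℕ) : ℝ)
      = ∑ s : Fin 3, Q r s *
          (X i s p - (∑ q : Fin (c j), X j s q) / ((c j : ℕ) : ℝ)) := by
    have key : (∑ q : Fin (c j), ((∑ s : Fin 3, Q r s * X j s q) + t r))
        = (∑ s : Fin 3, Q r s * ∑ q : Fin (c j), X j s q) + ((c j : ℕ) : ℝ) * t r := by
      rw [Finset.sum_add_distrib, Finset.sum_const, Finset.card_univ, Fintype.card_fin,
        Finset.sum_comm]
      simp [Finset.mul_sum, nsmul_eq_mul]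
    unfold rigid
    simp only [Matrix.of_apply]
    rw [key, add_div, mul_comm (((c j : ℕ):ℝ)) (t r), mul_div_assoc, div_self hcj, mul_one,
      Finset.sum_div]
    simp only [mul_sub, Finset.sum_sub_distrib, mul_div_assoc]
    ring
  simp only [Matrix.of_apply] at hcent ⊢
  rw [hcent, Finset.sum_mul]
  apply Finset.sum_congr rfl; intro s _; ring

/-- One adaptive multi-channel message-passing layer is E(3)-invariant on the hidden
states and E(3)-equivariant on the coordinates. -/
theorem layer_E3_equivariant [Fintype V]
    (c : V → ℕ) (hcpos : ∀ i, 0 < c i) (hC : ∀ i, c i ≤ C)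
    (A : (i : V) → Matrix (Fin (c i)) (Fin d) ℝ) (w : (i : V) → Fin (c i) → ℝ)
    (N : V → Finset V) (hN : ∀ i, (N i).Nonempty)
    (φm : (Fin dh → ℝ) → (Fin dh → ℝ) → Matrix (Fin d) (Fin d) ℝ → (Fin m' → ℝ))
    (φx : (Fin m' → ℝ) → (Fin C → ℝ))
    (φh : (Fin dh → ℝ) → (Fin m' → ℝ) → (Fin dh → ℝ))
    (h : V → Fin dh → ℝ) (X : (i : V) → Matrix (Fin 3) (Fin (c i)) ℝ)
    (Q : Matrix (Fin 3) (Fin 3) ℝ) (hQ : Qᵀ * Q = 1) (t : Fin 3 → ℝ) :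
    (∀ i, hOut c A w φm φh N h (fun j => rigid Q t (X j)) i = hOut c A w φm φh N h X i) ∧
    (∀ i, xOut c hC A w φm φx N h (fun j => rigid Q t (X j)) i
        = rigid Q t (xOut c hC A w φm φx N h X i)) := by
  constructor
  · intro i
    have hsum : (∑ j ∈ N i, msgOf c A w φm h (fun k => rigid Q t (X k)) i j)
        = ∑ j ∈ N i, msgOf c A w φm h X i j :=
      Finset.sum_congr rfl fun j _ => msgOf_rigid c A w φm h X hQ t i j
    unfold hOut
    rw [hsum]
  · intro i
    unfold xOut
    funext r p
    simp only [Matrix.add_apply, Matrix.smul_apply, Matrix.sum_apply, smul_eq_mul]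
    have hx : ∀ j, xMsgOf c hC A w φm φx h (fun k => rigid Q t (X k)) i j r p
        = ∑ s : Fin 3, Q r s * xMsgOf c hC A w φm φx h X i j s p := by
      intro j
      rw [xMsgOf_rigid c hcpos hC A w φm φx h X hQ t i j]
      simp
    simp only [hx]
    unfold rigid
    simp only [Matrix.of_apply, Matrix.add_apply, Matrix.smul_apply, Matrix.sum_apply,
      smul_eq_mul]
    have key : ∑ j ∈ N i, ∑ s : Fin 3, Q r s * xMsgOf c hC A w φm φx h X i j s p
        = ∑ s : Fin 3, Q r s * ∑ j ∈ N i, xMsgOf c hC A w φm φx h X i j s p := by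
      rw [Finset.sum_comm]
      exact Finset.sum_congr rfl fun s _ => (Finset.mul_sum _ _ _).symm
    rw [key, Finset.mul_sum]
    simp only [mul_add, Finset.sum_add_distrib]
    have swap : ∀ s : Fin 3,
        ((↑(N i).card : ℝ))⁻¹ * (Q r s * ∑ j ∈ N i, xMsgOf c hC A w φm φx h X i j s p)
        = Q r s * (((↑(N i).card : ℝ))⁻¹ * ∑ j ∈ N i, xMsgOf c hC A w φm φx h X i j s p) :=
      fun s => by ring
    simp only [swap]
    ring

end
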